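/- Let m ≥ 1 be an integer, p > 0, q ≠ 0 and Λ > 0 real numbers, and set M = (1/Λ)(2p/((m+1)q²))^{m/(m+1)}. Then there exists a unique differentiable function a : (0, ∞) → ℝ satisfying a'(τ) = m q² (2p/((m+1)q²) − (Λ a(τ))^{(m+1)/m})² for all τ > 0 and lim_{τ→0⁺} a(τ) = 0. Moreover, this function satisfies 0 < a(τ) < M for all τ > 0, a is strictly increasing, and lim_{τ→∞} a(τ) = M. -/

import Mathlib

open Set Filter intervalIntegral Real Topology

noncomputable def Fode (c C Λ α : ℝ) : ℝ → ℝ := fun x => c * (C - (Λ * x) ^ α) ^ 2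

noncomputable def Fode' (c C Λ α : ℝ) : ℝ → ℝ :=
  fun x => c * (2 * (C - (Λ * x) ^ α) * -(α * (Λ * x) ^ (α - 1) * Λ))

theorem Fode_hasDerivAt {c C Λ α : ℝ} (hα : 1 ≤ α) (x : ℝ) :
    HasDerivAt (Fode c C Λ α) (Fode' c C Λ α x) x := by
  have h1 : HasDerivAt (fun x : ℝ => Λ * x) Λ x := by
    simpa using (hasDerivAt_id x).const_mul Λ
  have h2 : HasDerivAt (fun u : ℝ => u ^ α) (α * (Λ * x) ^ (α - 1)) (Λ * x) :=
    Real.hasDerivAt_rpow_const (Or.inr hα)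
  have h3 : HasDerivAt (fun x : ℝ => (Λ * x) ^ α) (α * (Λ * x) ^ (α - 1) * Λ) x :=
    h2.comp x h1
  have h5 := ((h3.const_sub C).pow 2).const_mul c
  refine h5.congr_deriv ?_
  simp only [Fode', Fode]
  ring

theorem Fode_continuous {c C Λ α : ℝ} (hα : 0 ≤ α) : Continuous (Fode c C Λ α) := by
  have h : Continuous fun x : ℝ => (Λ * x) ^ α :=
    (continuous_const.mul continuous_id).rpow_const fun x => Or.inr hα
  exact continuous_const.mul ((continuous_const.sub h).pow 2)

theorem Fode'_continuous {c C Λ α : ℝ} (hα : 1 ≤ α) : Continuous (Fode' c C Λ α) := by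
  have h : Continuous fun x : ℝ => (Λ * x) ^ α :=
    (continuous_const.mul continuous_id).rpow_const fun x => Or.inr (by linarith)
  have h' : Continuous fun x : ℝ => (Λ * x) ^ (α - 1) :=
    (continuous_const.mul continuous_id).rpow_const fun x => Or.inr (by linarith)
  exact continuous_const.mul ((continuous_const.mul (continuous_const.sub h)).mul
    ((continuous_const.mul h').mul continuous_const).neg)

theorem ode_unique {c C Λ α : ℝ} (hc : 0 ≤ c) (hα : 1 < α) (a b : ℝ → ℝ)
    (hade : ∀ τ ∈ Ioi (0:ℝ), HasDerivAt a (Fode c C Λ α (a τ)) τ)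
    (ha0 : Tendsto a (𝓝[>] 0) (𝓝 0))
    (hbde : ∀ τ ∈ Ioi (0:ℝ), HasDerivAt b (Fode c C Λ α (b τ)) τ)
    (hb0 : Tendsto b (𝓝[>] 0) (𝓝 0)) : EqOn b a (Ioi 0) := by
  have hFnn : ∀ x : ℝ, 0 ≤ Fode c C Λ α x := fun x => mul_nonneg hc (sq_nonneg _)
  -- monotonicity of any solution
  have hmono : ∀ (f : ℝ → ℝ),
      (∀ τ ∈ Ioi (0:ℝ), HasDerivAt f (Fode c C Λ α (f τ)) τ) → MonotoneOn f (Ioi 0) := by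
    intro f hf
    apply monotoneOn_of_deriv_nonneg (convex_Ioi 0)
    · exact fun x hx => (hf x hx).continuousAt.continuousWithinAt
    · rw [interior_Ioi]
      exact fun x hx => (hf x hx).differentiableAt.differentiableWithinAt
    · rw [interior_Ioi]
      intro x hx
      rw [(hf x hx).deriv]
      exact hFnn _
  have hamono := hmono a hade
  have hbmono := hmono b hbde
  -- nonnegativity of any solution
  have hnn : ∀ (f : ℝ → ℝ), MonotoneOn f (Ioi 0) → Tendsto f (𝓝[>] 0) (𝓝 0) →
      ∀ τ ∈ Ioi (0:ℝ), 0 ≤ f τ := by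
    intro f hfm hf0 τ hτ
    refine le_of_tendsto hf0 ?_
    filter_upwards [Ioo_mem_nhdsGT_of_mem ⟨le_refl 0, hτ⟩] with s hs
    exact hfm hs.1 hτ hs.2.le
  have hann := hnn a hamono ha0
  have hbnn := hnn b hbmono hb0
  intro t ht
  have ht0 : (0:ℝ) < t := ht
  set R : ℝ := max (a t) (b t) with hR
  obtain ⟨B, hB⟩ := (isCompact_Icc (a := (0:ℝ)) (b := R)).exists_bound_of_continuousOn
    (Fode'_continuous hα.le).continuousOn
  set K : ℝ := max B 0 with hK
  have hK0 : 0 ≤ K := le_max_right _ _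
  have hlipF : ∀ x ∈ Icc (0:ℝ) R, ∀ y ∈ Icc (0:ℝ) R,
      ‖Fode c C Λ α x - Fode c C Λ α y‖ ≤ K * ‖x - y‖ := by
    intro x hx y hy
    exact Convex.norm_image_sub_le_of_norm_hasDerivWithin_le
      (fun z hz => (Fode_hasDerivAt hα.le z).hasDerivWithinAt)
      (fun z hz => le_trans (hB z hz) (le_max_left _ _)) (convex_Icc _ _) hy hx
  have key : ∀ δ ∈ Ioo (0:ℝ) t, ‖b t - a t‖ ≤ ‖b δ - a δ‖ * Real.exp (K * t) := by
    intro δ hδ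
    have hpos : ∀ s ∈ Icc δ t, (0:ℝ) < s := fun s hs => lt_of_lt_of_le hδ.1 hs.1
    have hgron := norm_le_gronwallBound_of_norm_deriv_right_le (a := δ) (b := t)
      (f := fun s => b s - a s) (f' := fun s => Fode c C Λ α (b s) - Fode c C Λ α (a s))
      (δ := ‖b δ - a δ‖) (K := K) (ε := 0)
      (fun s hs => (((hbde s (hpos s hs)).sub (hade s (hpos s hs))).continuousAt).continuousWithinAt)
      (fun s hs => ((hbde s (hpos s ⟨hs.1, hs.2.le⟩)).sub
        (hade s (hpos s ⟨hs.1, hs.2.le⟩))).hasDerivWithinAt)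
      le_rfl ?_
    · have h2 := hgron t (right_mem_Icc.2 hδ.2.le)
      rw [gronwallBound_ε0] at h2
      refine h2.trans (mul_le_mul_of_nonneg_left ?_ (norm_nonneg _))
      exact Real.exp_le_exp.2 (by nlinarith [hδ.1])
    · intro s hs
      have hs0 : (0:ℝ) < s := hpos s ⟨hs.1, hs.2.le⟩
      have hst : s ≤ t := hs.2.le
      have hbs : b s ∈ Icc (0:ℝ) R :=
        ⟨hbnn s hs0, le_trans (hbmono hs0 ht0 hst) (le_max_right _ _)⟩
      have has : a s ∈ Icc (0:ℝ) R :=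
        ⟨hann s hs0, le_trans (hamono hs0 ht0 hst) (le_max_left _ _)⟩
      simpa using hlipF _ hbs _ has
  have hlim : Tendsto (fun δ => ‖b δ - a δ‖ * Real.exp (K * t)) (𝓝[>] (0:ℝ)) (𝓝 0) := by
    have h1 : Tendsto (fun δ => b δ - a δ) (𝓝[>] (0:ℝ)) (𝓝 0) := by
      simpa using hb0.sub ha0
    simpa using h1.norm.mul_const (Real.exp (K * t))
  have hfin : ‖b t - a t‖ ≤ 0 := by
    refine ge_of_tendsto hlim ?_
    filter_upwards [Ioo_mem_nhdsGT_of_mem ⟨le_refl 0, ht0⟩] with δ hδ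
    exact key δ hδ
  have := norm_le_zero_iff.1 hfin
  exact sub_eq_zero.1 this

theorem ode_exists {c C Λ α : ℝ} (hc : 0 < c) (hC : 0 < C) (hΛ : 0 < Λ) (hα : 1 < α)
    (M : ℝ) (hM : M = C ^ α⁻¹ / Λ) :
    ∃ a : ℝ → ℝ,
      (∀ τ ∈ Ioi (0:ℝ), HasDerivAt a (Fode c C Λ α (a τ)) τ) ∧
      Tendsto a (𝓝[>] 0) (𝓝 0) ∧
      (∀ τ ∈ Ioi (0:ℝ), 0 < a τ ∧ a τ < M) ∧
      StrictMonoOn a (Ioi 0) ∧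
      Tendsto a atTop (𝓝 M) := by
  have hα0 : (0:ℝ) < α := lt_trans one_pos hα
  have hM0 : 0 < M := by rw [hM]; positivity
  have hΛM : Λ * M = C ^ α⁻¹ := by rw [hM]; field_simp
  have hMC : (Λ * M) ^ α = C := by rw [hΛM]; exact Real.rpow_inv_rpow hC.le hα0.ne'
  have h0mem : (0:ℝ) ∈ Ioo (-M) M := ⟨neg_lt_zero.2 hM0, hM0⟩
  have hIoo : Ioo (0:ℝ) M ⊆ Ioo (-M) M := Ioo_subset_Ioo (by linarith) le_rfl
  have hsub : ∀ x ∈ Ioo (-M) M, 0 < C - (Λ * x) ^ α := by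
    intro x hx
    have h1 : |(Λ * x) ^ α| ≤ |Λ * x| ^ α := Real.abs_rpow_le_abs_rpow _ _
    have h2 : |Λ * x| ^ α < C := by
      rw [← hMC]
      refine Real.rpow_lt_rpow (abs_nonneg _) ?_ hα0
      rw [abs_mul, abs_of_pos hΛ]
      exact (mul_lt_mul_iff_right₀ hΛ).2 (abs_lt.2 ⟨hx.1, hx.2⟩)
    have h3 := le_trans (le_abs_self _) h1
    linarith
  have hFpos : ∀ x ∈ Ioo (-M) M, 0 < Fode c C Λ α x := by
    intro x hx; exact mul_pos hc (pow_pos (hsub x hx) 2)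
  set G : ℝ → ℝ := fun x => (Fode c C Λ α x)⁻¹ with hGdef
  set T : ℝ → ℝ := fun x => ∫ s in (0:ℝ)..x, G s with hTdef
  have hGcont : ContinuousOn G (Ioo (-M) M) :=
    ((Fode_continuous hα0.le).continuousOn).inv₀ fun x hx => (hFpos x hx).ne'
  have hTderiv : ∀ b ∈ Ioo (-M) M, HasDerivAt T (G b) b := by
    intro b hb
    apply intervalIntegral.integral_hasDerivAt_right
    · exact (hGcont.mono ((ordConnected_Ioo).uIcc_subset h0mem hb)).intervalIntegrable
    · exact (hGcont.stronglyMeasurableAtFilter isOpen_Ioo) b hb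
    · exact hGcont.continuousAt (isOpen_Ioo.mem_nhds hb)
  have hT0 : T 0 = 0 := intervalIntegral.integral_same
  have hTcont : ContinuousOn T (Ioo (-M) M) := fun x hx =>
    ((hTderiv x hx).continuousAt).continuousWithinAt
  have hTmono : StrictMonoOn T (Ioo (-M) M) := by
    apply strictMonoOn_of_deriv_pos (convex_Ioo _ _) hTcont
    intro x hx
    rw [interior_Ioo] at hx
    rw [(hTderiv x hx).deriv]
    exact inv_pos.2 (hFpos x hx)
  -- Lipschitz bound near M and divergence of T
  set L : ℝ := α * Λ * (Λ * M) ^ (α - 1) with hLdef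
  have hLM0 : 0 < Λ * M := mul_pos hΛ hM0
  have hL0 : 0 < L := by
    have := Real.rpow_pos_of_pos hLM0 (α - 1)
    positivity
  have hlin : ∀ x ∈ Icc (0:ℝ) M, C - (Λ * x) ^ α ≤ L * (M - x) := by
    intro x hx
    have hd : ∀ z ∈ Icc (0:ℝ) M, HasDerivWithinAt (fun x : ℝ => C - (Λ * x) ^ α)
        (-(α * (Λ * z) ^ (α - 1) * Λ)) (Icc 0 M) z := by
      intro z hz
      have h1 : HasDerivAt (fun x : ℝ => Λ * x) Λ z := by
        simpa using (hasDerivAt_id z).const_mul Λ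
      have h2 : HasDerivAt (fun u : ℝ => u ^ α) (α * (Λ * z) ^ (α - 1)) (Λ * z) :=
        Real.hasDerivAt_rpow_const (Or.inr hα.le)
      exact ((h2.comp z h1).const_sub C).hasDerivWithinAt
    have hbd : ∀ z ∈ Icc (0:ℝ) M, ‖-(α * (Λ * z) ^ (α - 1) * Λ)‖ ≤ L := by
      intro z hz
      rw [norm_neg, Real.norm_eq_abs]
      have hz0 : 0 ≤ Λ * z := mul_nonneg hΛ.le hz.1
      have h1 : (Λ * z) ^ (α - 1) ≤ (Λ * M) ^ (α - 1) :=
        Real.rpow_le_rpow hz0 ((mul_le_mul_iff_right₀ hΛ).2 hz.2) (by linarith)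
      rw [abs_of_nonneg (by positivity)]
      calc α * (Λ * z) ^ (α - 1) * Λ ≤ α * (Λ * M) ^ (α - 1) * Λ :=
            mul_le_mul_of_nonneg_right (mul_le_mul_of_nonneg_left h1 hα0.le) hΛ.le
        _ = L := by rw [hLdef]; ring
    have hmvt := Convex.norm_image_sub_le_of_norm_hasDerivWithin_le hd hbd (convex_Icc _ _)
      (right_mem_Icc.2 hM0.le) hx
    rw [Real.norm_eq_abs, Real.norm_eq_abs] at hmvt
    have hxM : |x - M| = M - x := by rw [abs_sub_comm, abs_of_nonneg (by linarith [hx.2])]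
    rw [hxM] at hmvt
    have h5 : C - (Λ * x) ^ α - (C - (Λ * M) ^ α) = C - (Λ * x) ^ α := by rw [hMC]; ring
    rw [h5] at hmvt
    exact le_trans (le_abs_self _) hmvt
  -- lower bound for T via comparison with ψ
  set ψ : ℝ → ℝ := fun x => (c * L ^ 2)⁻¹ * (M - x)⁻¹ with hψdef
  have hψd : ∀ x : ℝ, x < M → HasDerivAt ψ ((c * L ^ 2)⁻¹ * ((M - x) ^ 2)⁻¹) x := by
    intro x hx
    have h1 : HasDerivAt (fun x : ℝ => M - x) (-1) x := by
      simpa using (hasDerivAt_id x).const_sub M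
    have h2 := (h1.inv (by intro h; rw [sub_eq_zero] at h; exact absurd h.symm (ne_of_lt hx))).const_mul
      ((c * L ^ 2)⁻¹)
    refine h2.congr_deriv ?_
    ring
  have hcomp : ∀ x ∈ Ico (0:ℝ) M, ψ x - ψ 0 ≤ T x := by
    intro x hx
    have hmono2 : MonotoneOn (fun x => T x - ψ x) (Ico 0 M) := by
      apply monotoneOn_of_deriv_nonneg (convex_Ico _ _)
      · intro z hz
        have hzM : z ∈ Ioo (-M) M := ⟨by linarith [hz.1], hz.2⟩
        exact ((hTderiv z hzM).sub (hψd z hz.2)).continuousAt.continuousWithinAt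
      · rw [interior_Ico]
        intro z hz
        have hzM : z ∈ Ioo (-M) M := hIoo hz
        exact ((hTderiv z hzM).sub (hψd z hz.2)).differentiableAt.differentiableWithinAt
      · rw [interior_Ico]
        intro z hz
        have hzM : z ∈ Ioo (-M) M := hIoo hz
        rw [show deriv (fun x => T x - ψ x) z = _ from ((hTderiv z hzM).sub (hψd z hz.2)).deriv]
        have hs := hsub z hzM
        have hl := hlin z ⟨hz.1.le, hz.2.le⟩
        have hMz : 0 < M - z := by linarith [hz.2]
        have h1 : (c * L ^ 2)⁻¹ * ((M - z) ^ 2)⁻¹ ≤ G z := by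
          rw [hGdef]
          simp only [Fode]
          rw [← mul_inv]
          apply inv_anti₀ (by positivity)
          have h2 : (C - (Λ * z) ^ α) ^ 2 ≤ (L * (M - z)) ^ 2 := pow_le_pow_left₀ hs.le hl 2
          nlinarith [mul_le_mul_of_nonneg_left h2 hc.le]
        linarith
    have h0mem' : (0:ℝ) ∈ Ico (0:ℝ) M := ⟨le_refl 0, hM0⟩
    have := hmono2 h0mem' hx hx.1
    simp only at this
    rw [hT0] at this
    linarith
  have hψtop : Tendsto (fun x => ψ x - ψ 0) (𝓝[<] M) atTop := by
    have h1 : Tendsto (fun x : ℝ => M - x) (𝓝[<] M) (𝓝[>] 0) := by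
      apply tendsto_nhdsWithin_of_tendsto_nhds_of_eventually_within
      · have hc1 : Continuous (fun x : ℝ => M - x) := continuous_const.sub continuous_id
        have h := hc1.tendsto M
        simp only [sub_self] at h
        exact h.mono_left nhdsWithin_le_nhds
      · filter_upwards [self_mem_nhdsWithin] with x hx
        simp only [mem_Ioi, sub_pos]
        exact hx
    have h2 : Tendsto (fun x : ℝ => (M - x)⁻¹) (𝓝[<] M) atTop :=
      tendsto_inv_nhdsGT_zero.comp h1
    have h3 : Tendsto ψ (𝓝[<] M) atTop := by
      rw [hψdef]
      exact h2.const_mul_atTop (by positivity)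
    exact tendsto_atTop_add_const_right _ (-(ψ 0)) h3
  have hTtop : ∀ A : ℝ, ∃ x ∈ Ioo (0:ℝ) M, A < T x := by
    intro A
    have h1 : ∀ᶠ x in 𝓝[<] M, A < ψ x - ψ 0 := hψtop.eventually_gt_atTop A
    have h2 : Ioo (0:ℝ) M ∈ 𝓝[<] M := Ioo_mem_nhdsLT hM0
    obtain ⟨x, hx1, hx2⟩ := (h1.and (Filter.eventually_of_mem h2 fun x hx => hx : ∀ᶠ x in 𝓝[<] M, x ∈ Ioo 0 M)).exists
    exact ⟨x, hx2, lt_of_lt_of_le hx1 (hcomp x ⟨hx2.1.le, hx2.2⟩)⟩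
  have hTsurj : ∀ τ : ℝ, 0 < τ → ∃ y, y ∈ Ioo 0 M ∧ T y = τ := by
    intro τ hτ
    obtain ⟨x, hx, hτx⟩ := hTtop τ
    have hsub2 : Icc (0:ℝ) x ⊆ Ioo (-M) M :=
      fun z hz => ⟨by linarith [hz.1], lt_of_le_of_lt hz.2 hx.2⟩
    have hIVT := intermediate_value_Ioo hx.1.le (hTcont.mono hsub2)
    have hτmem : τ ∈ Ioo (T 0) (T x) := by rw [hT0]; exact ⟨hτ, hτx⟩
    obtain ⟨y, hy, hTy⟩ := hIVT hτmem
    exact ⟨y, ⟨hy.1, lt_trans hy.2 hx.2⟩, hTy⟩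
  choose! a ha hTa using hTsurj
  -- T y > 0 for y ∈ Ioo 0 M
  have hTpos : ∀ y ∈ Ioo (0:ℝ) M, 0 < T y := by
    intro y hy
    rw [← hT0]
    exact hTmono h0mem (hIoo hy) hy.1
  -- a is a left inverse of T
  have haT : ∀ y ∈ Ioo (0:ℝ) M, a (T y) = y := by
    intro y hy
    have h1 := hTa _ (hTpos y hy)
    exact hTmono.injOn (hIoo (ha _ (hTpos y hy))) (hIoo hy) h1
  have hamono : StrictMonoOn a (Ioi 0) := by
    intro s hs t ht hst
    rcases lt_trichotomy (a s) (a t) with h | h | h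
    · exact h
    · exfalso
      have : T (a s) = T (a t) := by rw [h]
      rw [hTa _ hs, hTa _ ht] at this
      exact absurd this (ne_of_lt hst)
    · exfalso
      have := hTmono (hIoo (ha _ ht)) (hIoo (ha _ hs)) h
      rw [hTa _ hs, hTa _ ht] at this
      exact absurd hst (not_lt.2 this.le)
  -- continuity of a
  have hacont : ∀ τ ∈ Ioi (0:ℝ), ContinuousAt a τ := by
    intro τ hτ
    have haτ := ha τ hτ
    rw [ContinuousAt]
    apply tendsto_order.2
    constructor
    · intro l hl
      set l' : ℝ := max l (a τ / 2) with hl'def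
      have hl'1 : l' < a τ := max_lt hl (by linarith [haτ.1])
      have hl'mem : l' ∈ Ioo (0:ℝ) M :=
        ⟨lt_of_lt_of_le (by linarith [haτ.1]) (le_max_right _ _), lt_trans hl'1 haτ.2⟩
      have hTl' : T l' < τ := by
        rw [← hTa τ hτ]
        exact hTmono (hIoo hl'mem) (hIoo haτ) hl'1
      filter_upwards [isOpen_Ioi.mem_nhds hTl'] with s hs
      have hs0 : 0 < s := lt_trans (hTpos l' hl'mem) hs
      by_contra hcon
      push_neg at hcon
      have h1 : a s ≤ l' := le_trans hcon (le_max_left _ _)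
      have h2 : T (a s) ≤ T l' :=
        hTmono.monotoneOn (hIoo (ha s hs0)) (hIoo hl'mem) h1
      rw [hTa s hs0] at h2
      exact absurd hs (not_lt.2 h2)
    · intro u hu
      by_cases huM : u < M
      · have humem : u ∈ Ioo (0:ℝ) M := ⟨lt_trans haτ.1 hu, huM⟩
        have hTu : τ < T u := by
          rw [← hTa τ hτ]
          exact hTmono (hIoo haτ) (hIoo humem) hu
        filter_upwards [isOpen_Ioo.mem_nhds (⟨hτ, hTu⟩ : τ ∈ Ioo 0 (T u))] with s hs
        by_contra hcon
        push_neg at hcon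
        have h2 : T u ≤ T (a s) :=
          hTmono.monotoneOn (hIoo humem) (hIoo (ha s hs.1)) hcon
        rw [hTa s hs.1] at h2
        exact absurd hs.2 (not_lt.2 h2)
      · filter_upwards [isOpen_Ioi.mem_nhds hτ] with s hs
        exact lt_of_lt_of_le (ha s hs).2 (not_lt.1 huM)
  have hODE : ∀ τ ∈ Ioi (0:ℝ), HasDerivAt a (Fode c C Λ α (a τ)) τ := by
    intro τ hτ
    have haτ := ha τ hτ
    have h1 : HasDerivAt T (G (a τ)) (a τ) := hTderiv _ (hIoo haτ)
    have h2 : G (a τ) ≠ 0 := inv_ne_zero (hFpos _ (hIoo haτ)).ne'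
    have h3 : ∀ᶠ y in 𝓝 τ, T (a y) = y := by
      filter_upwards [isOpen_Ioi.mem_nhds hτ] with s hs
      exact hTa s hs
    have h4 := HasDerivAt.of_local_left_inverse (hacont τ hτ) h1 h2 h3
    simpa [hGdef, inv_inv] using h4
  have hlim0 : Tendsto a (𝓝[>] (0:ℝ)) (𝓝 0) := by
    apply tendsto_order.2
    constructor
    · intro l hl
      filter_upwards [self_mem_nhdsWithin] with s hs
      exact lt_trans hl (ha s hs).1
    · intro u hu
      by_cases huM : u < M
      · have humem : u ∈ Ioo (0:ℝ) M := ⟨hu, huM⟩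
        filter_upwards [Ioo_mem_nhdsGT_of_mem ⟨le_refl (0:ℝ), hTpos u humem⟩] with s hs
        by_contra hcon
        push_neg at hcon
        have h2 : T u ≤ T (a s) := hTmono.monotoneOn (hIoo humem) (hIoo (ha s hs.1)) hcon
        rw [hTa s hs.1] at h2
        exact absurd hs.2 (not_lt.2 h2)
      · filter_upwards [self_mem_nhdsWithin] with s hs
        exact lt_of_lt_of_le (ha s hs).2 (not_lt.1 huM)
  have hlimtop : Tendsto a atTop (𝓝 M) := by
    apply tendsto_order.2
    constructor
    · intro l hl
      set y : ℝ := max (M / 2) ((l + M) / 2) with hy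
      have hy1 : y < M := max_lt (by linarith) (by linarith)
      have hy0 : 0 < y := lt_of_lt_of_le (by linarith) (le_max_left _ _)
      have hymem : y ∈ Ioo (0:ℝ) M := ⟨hy0, hy1⟩
      have hly : l < y := lt_of_lt_of_le (by linarith : l < (l + M) / 2) (le_max_right _ _)
      filter_upwards [eventually_gt_atTop (T y)] with s hs
      have hs0 : 0 < s := lt_trans (hTpos y hymem) hs
      by_contra hcon
      push_neg at hcon
      have h1 : a s ≤ y := le_trans hcon hly.le
      have h2 : T (a s) ≤ T y := hTmono.monotoneOn (hIoo (ha s hs0)) (hIoo hymem) h1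
      rw [hTa s hs0] at h2
      exact absurd hs (not_lt.2 h2)
    · intro u hu
      filter_upwards [eventually_gt_atTop 0] with s hs
      exact lt_trans (ha s hs).2 hu
  exact ⟨a, hODE, hlim0, fun τ hτ => ⟨(ha τ hτ).1, (ha τ hτ).2⟩, hamono, hlimtop⟩

/-- existence, uniqueness and asymptotics of the solution of
`a' = m q² (2p/((m+1)q²) − (Λa)^{(m+1)/m})²` on `(0,∞)` with `a(0⁺) = 0`. -/
theorem stmt_1 (m : ℕ) (hm : 1 ≤ m) (p q Λ : ℝ) (hp : 0 < p) (hq : q ≠ 0) (hΛ : 0 < Λ)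
    (M : ℝ) (hM : M = (1 / Λ) * (2 * p / (((m : ℝ) + 1) * q ^ 2)) ^ ((m : ℝ) / (m + 1))) :
    ∃ a : ℝ → ℝ,
      ((∀ τ ∈ Set.Ioi (0 : ℝ), HasDerivAt a ((m : ℝ) * q ^ 2 *
          (2 * p / (((m : ℝ) + 1) * q ^ 2) - (Λ * a τ) ^ (((m : ℝ) + 1) / m)) ^ 2) τ) ∧
        Filter.Tendsto a (nhdsWithin 0 (Set.Ioi 0)) (nhds 0)) ∧
      (∀ a' : ℝ → ℝ,
        ((∀ τ ∈ Set.Ioi (0 : ℝ), HasDerivAt a' ((m : ℝ) * q ^ 2 *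
            (2 * p / (((m : ℝ) + 1) * q ^ 2) - (Λ * a' τ) ^ (((m : ℝ) + 1) / m)) ^ 2) τ) ∧
          Filter.Tendsto a' (nhdsWithin 0 (Set.Ioi 0)) (nhds 0)) →
        Set.EqOn a' a (Set.Ioi 0)) ∧
      (∀ τ ∈ Set.Ioi (0 : ℝ), 0 < a τ ∧ a τ < M) ∧
      StrictMonoOn a (Set.Ioi 0) ∧
      Filter.Tendsto a Filter.atTop (nhds M) := by
  have hm0 : (0:ℝ) < (m:ℝ) := by exact_mod_cast Nat.lt_of_lt_of_le Nat.zero_lt_one hm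
  set c : ℝ := (m:ℝ) * q ^ 2 with hc_def
  set C : ℝ := 2 * p / (((m : ℝ) + 1) * q ^ 2) with hC_def
  set α : ℝ := ((m : ℝ) + 1) / m with hα_def
  have hc : 0 < c := by positivity
  have hC : 0 < C := by positivity
  have hα : 1 < α := (one_lt_div hm0).2 (by linarith)
  have hαinv : α⁻¹ = (m : ℝ) / ((m:ℝ) + 1) := by rw [hα_def, inv_div]
  have hMeq : M = C ^ α⁻¹ / Λ := by rw [hM, hαinv]; ring
  obtain ⟨a, hODE, hlim0, hbd, hmono, htop⟩ := ode_exists hc hC hΛ hα M hMeq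
  refine ⟨a, ⟨fun τ hτ => ?_, hlim0⟩, ?_, hbd, hmono, htop⟩
  · simpa [Fode] using hODE τ hτ
  · rintro b ⟨hbde, hb0⟩
    refine ode_unique hc.le hα a b hODE hlim0 (fun τ hτ => ?_) hb0
    simpa [Fode] using hbde τ hτ
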